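/- For an even integer $l \geq 2$ and a complex number $w$ with $1 - l < \mathrm{Re}(w) < 1$, one has $\int_{\mathbb{R}} (1 - it/2)^{-l} |t|^{-w}\, dt = 2^{2-w} \sin(\pi w/2)\, B(1-w,\, l+w-1)$, where $B$ denotes the Euler beta function. Equivalently this equals $\Gamma_{\mathbb{R}}(1-w) \cdot 2^{2-2w}\pi^{1-w/2}\,\Gamma(l+w-1)/(\Gamma(w/2)\Gamma(l))$ with $\Gamma_{\mathbb{R}}(s) = \pi^{-s/2}\Gamma(s/2)$. -/

import Mathlib

namespace Stmt2Aux

open MeasureTheory Set Filter Topology Complex Metric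



lemma int_rpow_exp {c r : ℝ} (hc : -1 < c) (hr : 0 < r) :
    IntegrableOn (fun t : ℝ => t ^ c * Real.exp (-(r * t))) (Ioi (0:ℝ)) := by
  have h := Real.GammaIntegral_convergent (s := c + 1) (by linarith)
  simp only [add_sub_cancel_right] at h
  have h2 : IntegrableOn (fun x : ℝ => Real.exp (-(r * x)) * (r * x) ^ c) (Ioi 0) := by
    have := (integrableOn_Ioi_comp_mul_left_iff (fun x => Real.exp (-x) * x ^ c) 0 hr).2
      (by simpa using h)
    simpa using this
  have h3 : IntegrableOn (fun x : ℝ => r ^ (-c) * (Real.exp (-(r * x)) * (r * x) ^ c)) (Ioi 0) :=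
    h2.const_mul (r ^ (-c))
  refine h3.congr_fun (fun t ht => ?_) measurableSet_Ioi
  have ht' : (0:ℝ) < t := ht
  beta_reduce
  rw [Real.mul_rpow hr.le ht'.le, Real.rpow_neg hr.le]
  field_simp [(Real.rpow_pos_of_pos hr c).ne']

lemma aesm_cpow_exp (a b : ℂ) :
    AEStronglyMeasurable (fun t : ℝ => (t:ℂ) ^ a * Complex.exp (-(b * t)))
      (volume.restrict (Ioi (0:ℝ))) :=
  (((Complex.measurable_ofReal).pow measurable_const).mul
    ((Complex.measurable_ofReal.const_mul b).neg.cexp)).aestronglyMeasurable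

lemma norm_cpow_exp {t : ℝ} (ht : 0 < t) (a b : ℂ) :
    ‖(t:ℂ) ^ a * Complex.exp (-(b * t))‖ = t ^ a.re * Real.exp (-(b.re * t)) := by
  rw [norm_mul,
    Complex.norm_cpow_eq_rpow_re_of_pos ht, Complex.norm_exp]
  congr 2
  simp [Complex.mul_re]

lemma int_cpow_exp {a b : ℂ} (ha : 0 < a.re) (hb : 0 < b.re) :
    IntegrableOn (fun t : ℝ => (t:ℂ) ^ (a - 1) * Complex.exp (-(b * t))) (Ioi (0:ℝ)) := by
  refine (int_rpow_exp (c := a.re - 1) (by linarith) hb).mono' (aesm_cpow_exp _ _) ?_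
  refine (ae_restrict_iff' measurableSet_Ioi).2 (Eventually.of_forall fun t ht => ?_)
  rw [norm_cpow_exp ht]
  simp

lemma gammaLaplace_real {a : ℂ} (ha : 0 < a.re) {r : ℝ} (hr : 0 < r) :
    ∫ t : ℝ in Ioi 0, (t:ℂ) ^ (a - 1) * Complex.exp (-((r:ℂ) * t))
      = Complex.Gamma a * (r:ℂ) ^ (-a) := by
  have h := integral_cpow_mul_exp_neg_mul_Ioi ha hr
  rw [h, one_div, inv_cpow _ _ (by rw [Complex.arg_ofReal_of_nonneg hr.le]; exact Real.pi_ne_zero.symm),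
    ← cpow_neg, mul_comm]

lemma gammaLaplace {a : ℂ} (ha : 0 < a.re) {b : ℂ} (hb : 0 < b.re) :
    ∫ t : ℝ in Ioi 0, (t:ℂ) ^ (a - 1) * Complex.exp (-(b * t))
      = Complex.Gamma a * b ^ (-a) := by
  set U : Set ℂ := {z | 0 < z.re} with hU
  have hUopen : IsOpen U := isOpen_lt continuous_const Complex.continuous_re
  have hUconn : IsPreconnected U := (convex_halfSpace_re_gt 0).isPreconnected
  set f : ℂ → ℂ := fun b => ∫ t : ℝ in Ioi 0, (t:ℂ) ^ (a - 1) * Complex.exp (-(b * t)) with hf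
  set g : ℂ → ℂ := fun b => Complex.Gamma a * b ^ (-a) with hg
  have hderiv : ∀ b₀ ∈ U, HasDerivAt f
      (∫ t : ℝ in Ioi 0, ((t:ℂ) ^ (a - 1) * Complex.exp (-(b₀ * t))) * (-t)) b₀ := by
    intro b₀ hb₀
    have hb₀' : 0 < b₀.re := hb₀
    have hε : 0 < b₀.re / 2 := by linarith
    have key := hasDerivAt_integral_of_dominated_loc_of_deriv_le (𝕜 := ℂ)
      (F := fun b (t:ℝ) => (t:ℂ) ^ (a - 1) * Complex.exp (-(b * t)))
      (F' := fun b (t:ℝ) => ((t:ℂ) ^ (a - 1) * Complex.exp (-(b * t))) * (-(t:ℂ)))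
      (x₀ := b₀) (s := ball b₀ (b₀.re/2)) (μ := volume.restrict (Ioi 0))
      (bound := fun t => t ^ a.re * Real.exp (-(b₀.re/2 * t)))
      (ball_mem_nhds _ hε) (Eventually.of_forall fun b => aesm_cpow_exp _ _) (int_cpow_exp ha hb₀')
      ((aesm_cpow_exp _ _).mul (Complex.measurable_ofReal.neg.aestronglyMeasurable)) ?_
      (int_rpow_exp (by linarith) hε) ?_
    · exact key.2
    · refine (ae_restrict_iff' measurableSet_Ioi).2 (Eventually.of_forall fun t ht => ?_)
      intro b hball
      have ht' : (0:ℝ) < t := ht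
      have hbre : b₀.re/2 ≤ b.re := by
        have h1 : |(b - b₀).re| ≤ ‖b - b₀‖ := Complex.abs_re_le_norm _
        rw [mem_ball, Complex.dist_eq] at hball
        have := abs_lt.mp (lt_of_le_of_lt h1 hball)
        simp only [Complex.sub_re] at this
        linarith [this.1]
      rw [norm_mul, norm_cpow_exp ht', norm_neg, Complex.norm_real,
        Real.norm_of_nonneg ht'.le]
      have h1 : t ^ ((a-1).re) * Real.exp (-(b.re * t)) * t
          = t ^ a.re * Real.exp (-(b.re * t)) := by
        rw [show (a-1).re = a.re - 1 by simp]
        rw [mul_right_comm, ← Real.rpow_add_one ht'.ne', sub_add_cancel]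
      rw [h1]
      have h2 : Real.exp (-(b.re * t)) ≤ Real.exp (-(b₀.re/2 * t)) := by
        apply Real.exp_le_exp.2
        nlinarith
      exact mul_le_mul_of_nonneg_left h2 (Real.rpow_nonneg ht'.le _)
    · refine (ae_restrict_iff' measurableSet_Ioi).2 (Eventually.of_forall fun t ht => ?_)
      intro b hball
      have : HasDerivAt (fun b : ℂ => -(b * (t:ℂ))) (-(t:ℂ)) b := by
        simpa using ((hasDerivAt_id b).mul_const (t:ℂ)).fun_neg
      simpa [mul_assoc] using (this.cexp).const_mul ((t:ℂ) ^ (a-1))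
  have hfa : AnalyticOnNhd ℂ f U :=
    DifferentiableOn.analyticOnNhd
      (fun b hbU => ((hderiv b hbU).differentiableAt).differentiableWithinAt) hUopen
  have hga : AnalyticOnNhd ℂ g U := by
    refine DifferentiableOn.analyticOnNhd (fun z hz => ?_) hUopen
    exact ((differentiableAt_id.cpow (differentiableAt_const _)
      (Or.inl hz)).const_mul _).differentiableWithinAt
  have hfreq : ∃ᶠ z in 𝓝[≠] (1:ℂ), f z = g z := by
    have hu : Tendsto (fun n : ℕ => ((1 + (1:ℝ)/(n+1) : ℝ) : ℂ)) atTop (𝓝[≠] 1) := by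
      rw [tendsto_nhdsWithin_iff]
      constructor
      · have h1 : Tendsto (fun n : ℕ => (1 + (1:ℝ)/(n+1) : ℝ)) atTop (𝓝 1) := by
          simpa using (tendsto_const_nhds (x := (1:ℝ))).add tendsto_one_div_add_atTop_nhds_zero_nat
        have h2 := (Complex.continuous_ofReal.tendsto 1).comp h1
        simpa [Function.comp_def] using h2
      · refine Eventually.of_forall fun n => ?_
        simp only [mem_compl_iff, mem_singleton_iff]
        intro hcon
        rw [show (1:ℂ) = ((1:ℝ):ℂ) by norm_num, Complex.ofReal_inj] at hcon
        have : (1:ℝ)/(n+1) ≠ 0 := by positivity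
        exact this (by linarith)
    refine hu.frequently (Frequently.of_forall fun n => ?_)
    have hr : (0:ℝ) < 1 + (1:ℝ)/(n+1) := by positivity
    exact gammaLaplace_real ha hr
  have heq := hfa.eqOn_of_preconnected_of_frequently_eq hga hUconn
    (by simp [hU] : (1:ℂ) ∈ U) hfreq
  exact heq hb


section Half

variable {l : ℕ} {w c : ℂ}

lemma him (hcre : c.re = 0) (hc0 : c ≠ 0) : c.im ≠ 0 := by
  intro h
  exact hc0 (Complex.ext (by simp [hcre]) (by simp [h]))

lemma habs_sq (hcre : c.re = 0) (s : ℝ) :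
    (‖1 + c * s‖)^2 = 1 + (c.im * s)^2 := by
  rw [Complex.sq_norm, Complex.normSq_apply]
  simp only [Complex.add_re, Complex.add_im, Complex.one_re, Complex.one_im, Complex.mul_re,
    Complex.mul_im, Complex.ofReal_re, Complex.ofReal_im, hcre]
  ring

lemma habs_one_le (hcre : c.re = 0) (s : ℝ) : 1 ≤ ‖1 + c * s‖ := by
  nlinarith [habs_sq hcre s, norm_nonneg (1 + c * s), sq_nonneg (c.im * s),
    sq_nonneg (‖1 + c * s‖ - 1)]

lemma habs_ne (hcre : c.re = 0) (s : ℝ) : (1 + c * (s:ℂ)) ≠ 0 := by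
  intro h
  have := habs_one_le hcre s
  rw [h] at this
  simp only [norm_zero] at this
  linarith

lemma habs_ge (hcre : c.re = 0) {s : ℝ} (hs : 0 ≤ s) :
    |c.im| * s ≤ ‖1 + c * s‖ := by
  have h1 : |(1 + c * (s:ℂ)).im| ≤ ‖1 + c * s‖ := Complex.abs_im_le_norm _
  have h2 : (1 + c * (s:ℂ)).im = c.im * s := by simp
  rw [h2, abs_mul, _root_.abs_of_nonneg hs] at h1
  exact h1

lemma half_norm (hcre : c.re = 0) {s : ℝ} (hs : 0 < s) :
    ‖(1 + c * (s:ℂ)) ^ (-(l:ℤ)) * (s:ℂ) ^ (-w)‖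
      = ‖1 + c * s‖ ^ (-(l:ℝ)) * s ^ (-w.re) := by
  rw [norm_mul, norm_zpow,
    Complex.norm_cpow_eq_rpow_re_of_pos hs]
  congr 1
  rw [show (-(l:ℝ)) = ((-(l:ℤ) : ℤ) : ℝ) by push_cast; ring, Real.rpow_intCast]

lemma base_meas :
    Measurable (fun s : ℝ => (1 + c * (s:ℂ)) ^ (-(l:ℤ)) * (s:ℂ) ^ (-w)) := by
  have h1 : Measurable (fun s : ℝ => (1 + c * (s:ℂ))) :=
    measurable_const.add (Complex.measurable_ofReal.const_mul c)
  have h2 : Measurable (fun s : ℝ => (1 + c * (s:ℂ)) ^ (-(l:ℤ))) := by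
    simpa [zpow_neg, zpow_natCast] using (h1.pow_const l)
  exact h2.mul (Complex.measurable_ofReal.pow measurable_const)

lemma bnd_integrable (hl2 : 2 ≤ l) (hw1 : 1 - (l : ℝ) < w.re) (hw2 : w.re < 1)
    (hcre : c.re = 0) (hc0 : c ≠ 0) :
    IntegrableOn (fun s : ℝ => ‖1 + c * s‖ ^ (-(l:ℝ)) * s ^ (-w.re))
      (Ioi (0:ℝ)) := by
  have hmeas : Measurable (fun s : ℝ =>
      ‖1 + c * s‖ ^ (-(l:ℝ)) * s ^ (-w.re)) := by
    have h1 : Measurable (fun s : ℝ => ‖1 + c * s‖) :=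
      continuous_norm.measurable.comp
        (measurable_const.add (Complex.measurable_ofReal.const_mul c))
    exact (h1.pow measurable_const).mul (measurable_id.pow measurable_const)
  rw [← Ioc_union_Ioi_eq_Ioi (zero_le_one (α := ℝ))]
  refine IntegrableOn.union ?_ ?_
  · -- on Ioc 0 1 : bound by s ^ (-w.re)
    have hint : IntegrableOn (fun s : ℝ => s ^ (-w.re)) (Ioc (0:ℝ) 1) := by
      rw [integrableOn_Ioc_iff_integrableOn_Ioo]
      exact (intervalIntegral.integrableOn_Ioo_rpow_iff one_pos).2 (by linarith)
    refine hint.mono' hmeas.aestronglyMeasurable ?_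
    refine (ae_restrict_iff' measurableSet_Ioc).2 (Eventually.of_forall fun s hs => ?_)
    have hs0 : (0:ℝ) < s := hs.1
    rw [Real.norm_eq_abs, _root_.abs_of_nonneg (by positivity)]
    calc ‖1 + c * s‖ ^ (-(l:ℝ)) * s ^ (-w.re)
        ≤ 1 * s ^ (-w.re) := by
          apply mul_le_mul_of_nonneg_right _ (by positivity)
          exact Real.rpow_le_one_of_one_le_of_nonpos (habs_one_le hcre s) (neg_nonpos.mpr (Nat.cast_nonneg l))
      _ = s ^ (-w.re) := one_mul _
  · -- on Ioi 1 : bound by |c.im|^(-l) * s^(-w.re - l)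
    have hint : IntegrableOn (fun s : ℝ => |c.im| ^ (-(l:ℝ)) * s ^ (-w.re - l)) (Ioi (1:ℝ)) :=
      ((integrableOn_Ioi_rpow_of_lt (by push_cast; linarith) one_pos).const_mul _)
    refine hint.mono' hmeas.aestronglyMeasurable ?_
    refine (ae_restrict_iff' measurableSet_Ioi).2 (Eventually.of_forall fun s hs => ?_)
    have hs0 : (0:ℝ) < s := lt_trans one_pos hs
    rw [Real.norm_eq_abs, _root_.abs_of_nonneg (by positivity)]
    have him' := him hcre hc0
    have h1 : ‖1 + c * s‖ ^ (-(l:ℝ)) ≤ (|c.im| * s) ^ (-(l:ℝ)) :=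
      Real.rpow_le_rpow_of_nonpos (by positivity) (habs_ge hcre hs0.le) (neg_nonpos.mpr (Nat.cast_nonneg l))
    calc ‖1 + c * s‖ ^ (-(l:ℝ)) * s ^ (-w.re)
        ≤ (|c.im| * s) ^ (-(l:ℝ)) * s ^ (-w.re) :=
          mul_le_mul_of_nonneg_right h1 (by positivity)
      _ = |c.im| ^ (-(l:ℝ)) * s ^ (-w.re - l) := by
          rw [Real.mul_rpow (by positivity) hs0.le, sub_eq_add_neg, Real.rpow_add hs0,
            mul_comm (s ^ (-w.re)), mul_assoc]

lemma half_int_main (hl2 : 2 ≤ l) (hw1 : 1 - (l : ℝ) < w.re) (hw2 : w.re < 1)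
    (hcre : c.re = 0) (hc0 : c ≠ 0) :
    IntegrableOn (fun s : ℝ => (1 + c * (s:ℂ)) ^ (-(l:ℤ)) * (s:ℂ) ^ (-w)) (Ioi (0:ℝ)) := by
  refine (bnd_integrable hl2 hw1 hw2 hcre hc0).mono' base_meas.aestronglyMeasurable ?_
  refine (ae_restrict_iff' measurableSet_Ioi).2 (Eventually.of_forall fun s hs => ?_)
  rw [half_norm hcre hs]

lemma gammaint_integrable {d : ℝ} (hd : -1 < d) :
    IntegrableOn (fun x : ℝ => x ^ d * Real.exp (-x)) (Ioi (0:ℝ)) := by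
  have := int_rpow_exp hd one_pos
  simpa using this

lemma half_step (hl2 : 2 ≤ l) (hw1 : 1 - (l : ℝ) < w.re) (hw2 : w.re < 1)
    (hcre : c.re = 0) (hc0 : c ≠ 0) {e : ℝ} (he : 0 < e) :
    Complex.Gamma (l:ℂ) *
        ∫ s in Ioi (0:ℝ), (1 + c * (s:ℂ)) ^ (-(l:ℤ)) * (s:ℂ) ^ (-w)
          * Complex.exp (-((e:ℂ) * s))
      = Complex.Gamma (1 - w) *
        ∫ x in Ioi (0:ℝ), (x:ℂ) ^ ((l:ℂ) - 1) * Complex.exp (-(x:ℂ))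
          * ((e:ℂ) + c * x) ^ (w - 1) := by
  have hl0 : (0:ℝ) < l := by positivity
  have hlre : 0 < ((l:ℂ)).re := by simpa using hl0
  have h1w : 0 < ((1:ℂ) - w).re := by simp; linarith
  have hlm1 : (-1:ℝ) < (l:ℝ) - 1 := by linarith
  -- the two-variable integrand
  set G : ℝ → ℝ → ℂ := fun s x => (x:ℂ) ^ ((l:ℂ) - 1) *
    ((s:ℂ) ^ (-w) * (Complex.exp (-(x:ℂ)) * Complex.exp (-(((e:ℂ) + c * x) * s)))) with hG
  have hGmeas : AEStronglyMeasurable (Function.uncurry G)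
      ((volume.restrict (Ioi (0:ℝ))).prod (volume.restrict (Ioi (0:ℝ)))) := by
    have m2 : Measurable fun p : ℝ × ℝ => ((p.2:ℝ):ℂ) := Complex.measurable_ofReal.comp measurable_snd
    have m1 : Measurable fun p : ℝ × ℝ => ((p.1:ℝ):ℂ) := Complex.measurable_ofReal.comp measurable_fst
    exact ((m2.pow measurable_const).mul ((m1.pow measurable_const).mul
      ((m2.neg.cexp).mul (((measurable_const.add (m2.const_mul c)).mul m1).neg.cexp)))).aestronglyMeasurable
  have hGint : Integrable (Function.uncurry G)
      ((volume.restrict (Ioi (0:ℝ))).prod (volume.restrict (Ioi (0:ℝ)))) := by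
    have hf : Integrable (fun s : ℝ => s ^ (-w.re) * Real.exp (-(e * s)))
        (volume.restrict (Ioi (0:ℝ))) := int_rpow_exp (by linarith) he
    have hg : Integrable (fun x : ℝ => x ^ ((l:ℝ) - 1) * Real.exp (-x))
        (volume.restrict (Ioi (0:ℝ))) := gammaint_integrable hlm1
    refine (hf.mul_prod hg).mono' hGmeas ?_
    rw [Measure.prod_restrict]
    refine (ae_restrict_iff' (measurableSet_Ioi.prod measurableSet_Ioi)).2
      (Eventually.of_forall fun p hp => ?_)
    obtain ⟨hs, hx⟩ := hp
    have hs' : (0:ℝ) < p.1 := hs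
    have hx' : (0:ℝ) < p.2 := hx
    have hre : (-(((e:ℂ) + c * p.2) * p.1)).re = -(e * p.1) := by
      simp [Complex.mul_re, hcre]
    simp only [Function.uncurry, hG, norm_mul, Complex.norm_exp,
      Complex.norm_cpow_eq_rpow_re_of_pos hs', Complex.norm_cpow_eq_rpow_re_of_pos hx', hre]
    have h1 : ((l:ℂ) - 1).re = (l:ℝ) - 1 := by simp
    have h2 : (-w).re = -w.re := by simp
    have h3 : (-((p.2:ℝ):ℂ)).re = -p.2 := by simp
    rw [h1, h2, h3]
    exact le_of_eq (by ring)
  -- start computing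
  rw [← integral_const_mul, ← integral_const_mul]
  rw [show (∫ s in Ioi (0:ℝ), Complex.Gamma (l:ℂ) * ((1 + c * (s:ℂ)) ^ (-(l:ℤ)) * (s:ℂ) ^ (-w)
      * Complex.exp (-((e:ℂ) * s)))) = ∫ s in Ioi (0:ℝ), ∫ x in Ioi (0:ℝ), G s x from ?_]
  · rw [integral_integral_swap hGint]
    refine setIntegral_congr_fun measurableSet_Ioi fun x hx => ?_
    have hx' : (0:ℝ) < x := hx
    have hbx : 0 < ((e:ℂ) + c * x).re := by simpa [Complex.mul_re, hcre] using he
    have hpt : ∀ s : ℝ, G s x = ((x:ℂ) ^ ((l:ℂ) - 1) * Complex.exp (-(x:ℂ))) *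
        ((s:ℂ) ^ (((1:ℂ) - w) - 1) * Complex.exp (-(((e:ℂ) + c * x) * s))) := by
      intro s
      rw [show ((1:ℂ) - w) - 1 = -w by ring, hG]
      ring
    calc (∫ s in Ioi (0:ℝ), G s x)
        = ∫ s in Ioi (0:ℝ), ((x:ℂ) ^ ((l:ℂ) - 1) * Complex.exp (-(x:ℂ))) *
            ((s:ℂ) ^ (((1:ℂ) - w) - 1) * Complex.exp (-(((e:ℂ) + c * x) * s))) := by
          exact setIntegral_congr_fun measurableSet_Ioi fun s _ => hpt s
      _ = ((x:ℂ) ^ ((l:ℂ) - 1) * Complex.exp (-(x:ℂ))) *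
            ∫ s in Ioi (0:ℝ), (s:ℂ) ^ (((1:ℂ) - w) - 1) * Complex.exp (-(((e:ℂ) + c * x) * s)) :=
          integral_const_mul _ _
      _ = Complex.Gamma (1 - w) * ((x:ℂ) ^ ((l:ℂ) - 1) * Complex.exp (-(x:ℂ))
            * ((e:ℂ) + c * x) ^ (w - 1)) := by
          rw [gammaLaplace h1w hbx, show -((1:ℂ) - w) = w - 1 from neg_sub _ _]
          ring
  · refine (setIntegral_congr_fun measurableSet_Ioi fun s hs => ?_).symm
    have hs' : (0:ℝ) < s := hs
    have hb1 : 0 < ((1:ℂ) + c * s).re := by simp [Complex.mul_re, hcre]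
    have hgl := gammaLaplace hlre hb1
    have hzc : ((1:ℂ) + c * s) ^ (-((l:ℂ))) = (1 + c * (s:ℂ)) ^ (-(l:ℤ)) := by
      rw [show (-((l:ℂ))) = ((-(l:ℤ) : ℤ) : ℂ) by push_cast; ring, cpow_intCast]
    have hexp : ∀ x : ℝ, Complex.exp (-((1 + c * (s:ℂ)) * x)) * Complex.exp (-((e:ℂ) * s))
        = Complex.exp (-(x:ℂ)) * Complex.exp (-(((e:ℂ) + c * x) * s)) := by
      intro x
      rw [← Complex.exp_add, ← Complex.exp_add]
      congr 1
      ring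
    calc (∫ x in Ioi (0:ℝ), G s x)
        = ∫ x in Ioi (0:ℝ), ((x:ℂ) ^ ((l:ℂ) - 1) * Complex.exp (-((1 + c * (s:ℂ)) * x))) *
            ((s:ℂ) ^ (-w) * Complex.exp (-((e:ℂ) * s))) := by
          refine setIntegral_congr_fun measurableSet_Ioi fun x _ => ?_
          rw [hG]
          have := hexp x
          linear_combination (-((x:ℂ) ^ ((l:ℂ) - 1) * (s:ℂ) ^ (-w))) * this
      _ = (∫ x in Ioi (0:ℝ), (x:ℂ) ^ ((l:ℂ) - 1) * Complex.exp (-((1 + c * (s:ℂ)) * x))) *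
            ((s:ℂ) ^ (-w) * Complex.exp (-((e:ℂ) * s))) := integral_mul_const _ _
      _ = Complex.Gamma (l:ℂ) * ((1 + c * (s:ℂ)) ^ (-(l:ℤ)) * (s:ℂ) ^ (-w)
            * Complex.exp (-((e:ℂ) * s))) := by
          rw [hgl, hzc, mul_assoc, mul_assoc]

lemma cpow_real_mul (hc0 : c ≠ 0) {x : ℝ} (hx : 0 < x) (y : ℂ) :
    (c * (x:ℂ)) ^ y = c ^ y * (x:ℂ) ^ y := by
  have h1 : ((x:ℂ)) ≠ 0 := Complex.ofReal_ne_zero.2 hx.ne'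
  rw [mul_comm c, cpow_def_of_ne_zero (mul_ne_zero h1 hc0), cpow_def_of_ne_zero hc0,
    cpow_def_of_ne_zero h1, Complex.log_ofReal_mul hx hc0, ← Complex.exp_add]
  congr 1
  rw [← Complex.ofReal_log hx.le]
  ring

lemma half (hl2 : 2 ≤ l) (hw1 : 1 - (l : ℝ) < w.re) (hw2 : w.re < 1)
    (hcre : c.re = 0) (hc0 : c ≠ 0) :
    ∫ s in Ioi (0:ℝ), (1 + c * (s:ℂ)) ^ (-(l:ℤ)) * (s:ℂ) ^ (-w)
      = c ^ (w - 1) * (Complex.Gamma (1 - w) * Complex.Gamma ((l:ℂ) + w - 1)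
          / Complex.Gamma (l:ℂ)) := by
  have him' : c.im ≠ 0 := him hcre hc0
  have hl0 : (0:ℝ) < l := by positivity
  set eps : ℕ → ℝ := fun n => 1/(n+1) with heps
  have heps_pos : ∀ n : ℕ, 0 < eps n := fun n => by positivity
  have heps0 : Tendsto eps atTop (𝓝 0) := tendsto_one_div_add_atTop_nhds_zero_nat
  have hepsC : Tendsto (fun n => ((eps n : ℝ):ℂ)) atTop (𝓝 0) := by
    simpa [Function.comp_def] using (Complex.continuous_ofReal.tendsto 0).comp heps0
  -- J limit
  have hJ : Tendsto (fun n => ∫ s in Ioi (0:ℝ),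
      (1 + c * (s:ℂ)) ^ (-(l:ℤ)) * (s:ℂ) ^ (-w) * Complex.exp (-((eps n : ℂ) * s))) atTop
      (𝓝 (∫ s in Ioi (0:ℝ), (1 + c * (s:ℂ)) ^ (-(l:ℤ)) * (s:ℂ) ^ (-w))) := by
    refine tendsto_integral_of_dominated_convergence
      (fun s => ‖1 + c * s‖ ^ (-(l:ℝ)) * s ^ (-w.re))
      (fun n => (base_meas.mul
        ((Complex.measurable_ofReal.const_mul _).neg.cexp)).aestronglyMeasurable)
      (bnd_integrable hl2 hw1 hw2 hcre hc0) (fun n => ?_) ?_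
    · refine (ae_restrict_iff' measurableSet_Ioi).2 (Eventually.of_forall fun s hs => ?_)
      have hs' : (0:ℝ) < s := hs
      rw [norm_mul, half_norm hcre hs']
      calc ‖1 + c * s‖ ^ (-(l:ℝ)) * s ^ (-w.re) * ‖Complex.exp (-((eps n : ℂ) * s))‖
          ≤ ‖1 + c * s‖ ^ (-(l:ℝ)) * s ^ (-w.re) * 1 := by
            apply mul_le_mul_of_nonneg_left _ (by positivity)
            rw [Complex.norm_exp]
            apply Real.exp_le_one_iff.2
            have : (-(((eps n : ℝ):ℂ) * (s:ℂ))).re = -(eps n * s) := by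
              simp [Complex.mul_re]
            rw [this]
            have := (heps_pos n).le
            nlinarith [hs'.le]
        _ = ‖1 + c * s‖ ^ (-(l:ℝ)) * s ^ (-w.re) := mul_one _
    · refine (ae_restrict_iff' measurableSet_Ioi).2 (Eventually.of_forall fun s hs => ?_)
      have h3 : Tendsto (fun n => -((eps n : ℂ) * (s:ℂ))) atTop (𝓝 0) := by
        simpa using (hepsC.mul_const (s:ℂ)).neg
      have h2 : Tendsto (fun n => Complex.exp (-((eps n : ℂ) * s))) atTop (𝓝 1) := by
        simpa [Function.comp_def] using (Complex.continuous_exp.tendsto 0).comp h3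
      simpa using tendsto_const_nhds.mul h2
  -- K limit
  have hwre2 : (-1:ℝ) < (l:ℝ) + w.re - 2 := by linarith
  set C : ℝ := |c.im| ^ (w.re - 1) * Real.exp (Real.pi / 2 * |w.im|) with hC
  have hKbound_int : IntegrableOn
      (fun x : ℝ => C * (x ^ ((l:ℝ) + w.re - 2) * Real.exp (-x))) (Ioi (0:ℝ)) :=
    (gammaint_integrable hwre2).const_mul C
  have hK : Tendsto (fun n => ∫ x in Ioi (0:ℝ), (x:ℂ) ^ ((l:ℂ) - 1) * Complex.exp (-(x:ℂ))
      * ((eps n : ℂ) + c * x) ^ (w - 1)) atTop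
      (𝓝 (∫ x in Ioi (0:ℝ), (x:ℂ) ^ ((l:ℂ) - 1) * Complex.exp (-(x:ℂ))
        * (c ^ (w-1) * (x:ℂ) ^ (w-1)))) := by
    refine tendsto_integral_of_dominated_convergence
      (fun x => C * (x ^ ((l:ℝ) + w.re - 2) * Real.exp (-x))) (fun n => ?_) hKbound_int
      (fun n => ?_) ?_
    · exact (((Complex.measurable_ofReal.pow measurable_const).mul
        (Complex.measurable_ofReal.neg.cexp)).mul
        ((measurable_const.add (Complex.measurable_ofReal.const_mul c)).pow
          measurable_const)).aestronglyMeasurable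
    · refine (ae_restrict_iff' measurableSet_Ioi).2 (Eventually.of_forall fun x hx => ?_)
      have hx' : (0:ℝ) < x := hx
      have hzre : (0:ℝ) < (((eps n : ℝ):ℂ) + c * x).re := by
        simpa [Complex.mul_re, hcre] using heps_pos n
      have hz0 : (((eps n : ℝ):ℂ) + c * x) ≠ 0 := by
        intro h; rw [h] at hzre; simp at hzre
      rw [norm_mul, norm_mul,
        Complex.norm_cpow_eq_rpow_re_of_pos hx', Complex.norm_exp,
        Complex.norm_cpow_of_ne_zero hz0]
      have hre1 : ((l:ℂ) - 1).re = (l:ℝ) - 1 := by simp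
      have hre2 : (-(x:ℂ)).re = -x := by simp
      have hre3 : (w - 1).re = w.re - 1 := by simp
      have hre4 : (w - 1).im = w.im := by simp
      have him_eq : (((eps n : ℝ):ℂ) + c * x).im = c.im * x := by
        simp [Complex.add_im, Complex.mul_im]
      have habs_lb : |c.im| * x ≤ ‖((eps n : ℝ):ℂ) + c * x‖ := by
        have h := Complex.abs_im_le_norm (((eps n : ℝ):ℂ) + c * x)
        rw [him_eq, abs_mul, _root_.abs_of_pos hx'] at h
        exact h
      have harg : |(((eps n : ℝ):ℂ) + c * x).arg| ≤ Real.pi / 2 :=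
        Complex.abs_arg_le_pi_div_two_iff.2 hzre.le
      have h1 : ‖((eps n : ℝ):ℂ) + c * x‖ ^ (w - 1).re
          ≤ (|c.im| * x) ^ (w.re - 1) := by
        rw [hre3]
        exact Real.rpow_le_rpow_of_nonpos (by positivity) habs_lb (by linarith)
      have h2 : (Real.exp ((((eps n : ℝ):ℂ) + c * x).arg * (w - 1).im))⁻¹
          ≤ Real.exp (Real.pi / 2 * |w.im|) := by
        rw [← Real.exp_neg]
        apply Real.exp_le_exp.2
        rw [hre4]
        calc -((((eps n : ℝ):ℂ) + c * x).arg * w.im)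
            ≤ |(((eps n : ℝ):ℂ) + c * x).arg * w.im| := neg_le_abs _
          _ = |(((eps n : ℝ):ℂ) + c * x).arg| * |w.im| := abs_mul _ _
          _ ≤ Real.pi / 2 * |w.im| := by
              apply mul_le_mul_of_nonneg_right harg (abs_nonneg _)
      have hdiv : ‖((eps n : ℝ):ℂ) + c * x‖ ^ (w - 1).re /
          Real.exp ((((eps n : ℝ):ℂ) + c * x).arg * (w - 1).im)
          ≤ (|c.im| * x) ^ (w.re - 1) * Real.exp (Real.pi / 2 * |w.im|) := by
        rw [div_eq_mul_inv]
        exact mul_le_mul h1 h2 (by positivity) (by positivity)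
      rw [hre1, hre2]
      calc x ^ ((l:ℝ) - 1) * Real.exp (-x) *
            (‖((eps n : ℝ):ℂ) + c * x‖ ^ (w - 1).re /
              Real.exp ((((eps n : ℝ):ℂ) + c * x).arg * (w - 1).im))
          ≤ x ^ ((l:ℝ) - 1) * Real.exp (-x) *
            ((|c.im| * x) ^ (w.re - 1) * Real.exp (Real.pi / 2 * |w.im|)) :=
            mul_le_mul_of_nonneg_left hdiv (by positivity)
        _ = C * (x ^ ((l:ℝ) + w.re - 2) * Real.exp (-x)) := by
            rw [Real.mul_rpow (abs_nonneg _) hx'.le, hC]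
            have hxx : x ^ ((l:ℝ) - 1) * x ^ (w.re - 1) = x ^ ((l:ℝ) + w.re - 2) := by
              rw [← Real.rpow_add hx']; congr 1; ring
            calc x ^ ((l:ℝ) - 1) * Real.exp (-x) *
                  (|c.im| ^ (w.re - 1) * x ^ (w.re - 1) * Real.exp (Real.pi / 2 * |w.im|))
                = (x ^ ((l:ℝ) - 1) * x ^ (w.re - 1)) * Real.exp (-x) *
                  (|c.im| ^ (w.re - 1) * Real.exp (Real.pi / 2 * |w.im|)) := by ring
              _ = _ := by rw [hxx]; ring
    · refine (ae_restrict_iff' measurableSet_Ioi).2 (Eventually.of_forall fun x hx => ?_)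
      have hx' : (0:ℝ) < x := hx
      have hslit : c * (x:ℂ) ∈ Complex.slitPlane := by
        refine Or.inr ?_
        have him2 : (c * (x:ℂ)).im = c.im * x := by simp [Complex.mul_im]
        rw [him2]
        exact mul_ne_zero him' hx'.ne'
      have hbase : Tendsto (fun n => ((eps n : ℝ):ℂ) + c * x) atTop (𝓝 (c * (x:ℂ))) := by
        simpa using hepsC.add_const (c * (x:ℂ))
      have hpow : Tendsto (fun n => (((eps n : ℝ):ℂ) + c * x) ^ (w - 1)) atTop
          (𝓝 ((c * (x:ℂ)) ^ (w - 1))) :=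
        ((continuousAt_cpow_const hslit).tendsto).comp hbase
      rw [show (c:ℂ) ^ (w-1) * (x:ℂ) ^ (w-1) = (c * (x:ℂ)) ^ (w-1) from
        (cpow_real_mul hc0 hx' _).symm]
      exact tendsto_const_nhds.mul hpow
  -- combine
  have hΓl : Complex.Gamma (l:ℂ) ≠ 0 := Complex.Gamma_ne_zero_of_re_pos (by simpa using hl0)
  have hre : 0 < ((l:ℂ) + w - 1).re := by simp; linarith
  have hKval : (∫ x in Ioi (0:ℝ), (x:ℂ) ^ ((l:ℂ) - 1) * Complex.exp (-(x:ℂ))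
      * (c ^ (w-1) * (x:ℂ) ^ (w-1))) = c ^ (w-1) * Complex.Gamma ((l:ℂ) + w - 1) := by
    rw [Complex.Gamma_eq_integral hre]
    rw [Complex.GammaIntegral, ← integral_const_mul]
    refine setIntegral_congr_fun measurableSet_Ioi fun x hx => ?_
    have hx' : (0:ℝ) < x := hx
    have hxne : ((x:ℂ)) ≠ 0 := Complex.ofReal_ne_zero.2 hx'.ne'
    have hcomb : (x:ℂ) ^ ((l:ℂ) - 1) * (x:ℂ) ^ (w - 1) = (x:ℂ) ^ (((l:ℂ) + w - 1) - 1) := by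
      rw [← Complex.cpow_add _ _ hxne]; congr 1; ring
    have hexp : Complex.exp (-(x:ℂ)) = ((Real.exp (-x) : ℝ) : ℂ) := by
      rw [Complex.ofReal_exp, Complex.ofReal_neg]
    rw [hexp]
    linear_combination (c ^ (w-1) * ((Real.exp (-x) : ℝ):ℂ)) * hcomb
  have h1 : Tendsto (fun n : ℕ => Complex.Gamma (l:ℂ) * ∫ s in Ioi (0:ℝ),
      (1 + c * (s:ℂ)) ^ (-(l:ℤ)) * (s:ℂ) ^ (-w) * Complex.exp (-((eps n : ℂ) * s))) atTop
      (𝓝 (Complex.Gamma (l:ℂ) * ∫ s in Ioi (0:ℝ),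
        (1 + c * (s:ℂ)) ^ (-(l:ℤ)) * (s:ℂ) ^ (-w))) := hJ.const_mul _
  have h2 : Tendsto (fun n : ℕ => Complex.Gamma (1 - w) * ∫ x in Ioi (0:ℝ),
      (x:ℂ) ^ ((l:ℂ) - 1) * Complex.exp (-(x:ℂ)) * ((eps n : ℂ) + c * x) ^ (w - 1)) atTop
      (𝓝 (Complex.Gamma (1 - w) * ∫ x in Ioi (0:ℝ), (x:ℂ) ^ ((l:ℂ) - 1)
        * Complex.exp (-(x:ℂ)) * (c ^ (w-1) * (x:ℂ) ^ (w-1)))) := hK.const_mul _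
  have h1' := (tendsto_congr fun n => half_step hl2 hw1 hw2 hcre hc0 (heps_pos n)).1 h1
  have huniq := tendsto_nhds_unique h1' h2
  rw [hKval] at huniq
  have hrw : c ^ (w - 1) * (Complex.Gamma (1 - w) * Complex.Gamma ((l:ℂ) + w - 1)
      / Complex.Gamma (l:ℂ))
      = (Complex.Gamma (1 - w) * (c ^ (w - 1) * Complex.Gamma ((l:ℂ) + w - 1)))
        / Complex.Gamma (l:ℂ) := by ring
  rw [hrw, eq_div_iff hΓl]
  linear_combination huniq


end Half


lemma exp_pi2 : Complex.exp ((Real.pi:ℂ)/2 * I) = I := by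
  rw [Complex.exp_mul_I]
  simp [← Complex.ofReal_div, ← Complex.ofReal_cos, ← Complex.ofReal_sin]

lemma exp_neg_pi2 : Complex.exp (-((Real.pi:ℂ)/2 * I)) = -I := by
  rw [Complex.exp_neg, exp_pi2, Complex.inv_I]

lemma log2C : Complex.log 2 = ((Real.log 2 : ℝ) : ℂ) := by
  rw [show (2:ℂ) = ((2:ℝ):ℂ) by norm_num, Complex.ofReal_log (by norm_num : (0:ℝ) ≤ 2)]

lemma logI2 : Complex.log (I/2) = -((Real.log 2 : ℝ):ℂ) + (Real.pi:ℂ)/2 * I := by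
  rw [show (I/2 : ℂ) = (((2:ℝ)⁻¹ : ℝ):ℂ) * I by push_cast; ring,
    Complex.log_ofReal_mul (by norm_num) Complex.I_ne_zero, Complex.log_I, Real.log_inv]
  push_cast
  ring

lemma logNegI2 : Complex.log (-(I/2)) = -((Real.log 2 : ℝ):ℂ) + -((Real.pi:ℂ)/2 * I) := by
  rw [show (-(I/2) : ℂ) = (((2:ℝ)⁻¹ : ℝ):ℂ) * (-I) by push_cast; ring,
    Complex.log_ofReal_mul (by norm_num) (by simpa using Complex.I_ne_zero),
    Complex.log_neg_I, Real.log_inv]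
  push_cast
  ring

lemma powsum (w : ℂ) :
    (-(I/2)) ^ (w-1) + (I/2) ^ (w-1)
      = (2:ℂ) ^ ((2:ℂ) - w) * Complex.sin ((Real.pi:ℂ) * w / 2) := by
  have h2 : (2:ℂ) ≠ 0 := two_ne_zero
  have hI2 : (I/2 : ℂ) ≠ 0 := by simp [Complex.I_ne_zero]
  have hI2' : (-(I/2) : ℂ) ≠ 0 := neg_ne_zero.2 hI2
  have hL : Complex.exp ((Real.log 2 : ℝ):ℂ) = 2 := by
    rw [← Complex.ofReal_exp, Real.exp_log two_pos]
    norm_num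
  have e1 : (I/2:ℂ)^(w-1) = Complex.exp (-(((Real.log 2 : ℝ):ℂ) * w)) *
      (Complex.exp ((Real.log 2 : ℝ):ℂ) *
        (Complex.exp ((Real.pi:ℂ)/2 * w * I) * Complex.exp (-((Real.pi:ℂ)/2 * I)))) := by
    rw [cpow_def_of_ne_zero hI2, logI2, ← Complex.exp_add, ← Complex.exp_add, ← Complex.exp_add]
    congr 1
    ring
  have e2 : (-(I/2):ℂ)^(w-1) = Complex.exp (-(((Real.log 2 : ℝ):ℂ) * w)) *
      (Complex.exp ((Real.log 2 : ℝ):ℂ) *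
        (Complex.exp (-((Real.pi:ℂ)/2 * w * I)) * Complex.exp ((Real.pi:ℂ)/2 * I))) := by
    rw [cpow_def_of_ne_zero hI2', logNegI2, ← Complex.exp_add, ← Complex.exp_add,
      ← Complex.exp_add]
    congr 1
    ring
  have e3 : (2:ℂ) ^ ((2:ℂ) - w) = Complex.exp ((Real.log 2 : ℝ):ℂ) *
      Complex.exp ((Real.log 2 : ℝ):ℂ) * Complex.exp (-(((Real.log 2 : ℝ):ℂ) * w)) := by
    rw [cpow_def_of_ne_zero h2, log2C, ← Complex.exp_add, ← Complex.exp_add]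
    congr 1
    ring
  have e4 : Complex.sin ((Real.pi:ℂ) * w / 2) =
      (Complex.exp (-((Real.pi:ℂ)/2 * w * I)) - Complex.exp ((Real.pi:ℂ)/2 * w * I)) * I / 2 := by
    rw [Complex.sin, show -((Real.pi:ℂ) * w / 2) * I = -((Real.pi:ℂ)/2 * w * I) by ring,
      show ((Real.pi:ℂ) * w / 2) * I = (Real.pi:ℂ)/2 * w * I by ring]
  rw [e1, e2, e3, e4, exp_pi2, exp_neg_pi2, hL]
  ring

lemma gamma_alg {l : ℕ} (hl2 : 2 ≤ l) {w : ℂ} (hw1 : 1 - (l : ℝ) < w.re) (hw2 : w.re < 1) :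
    (2:ℂ) ^ ((2:ℂ) - w) * Complex.sin ((Real.pi:ℂ) * w / 2) *
      (Complex.Gamma (1-w) * Complex.Gamma ((l:ℂ)+w-1)
        / Complex.Gamma ((1 - w) + ((l:ℂ) + w - 1)))
    = ((Real.pi:ℂ) ^ (-(1-w)/2) * Complex.Gamma ((1-w)/2)) * (2:ℂ) ^ ((2:ℂ) - 2*w) *
      (Real.pi:ℂ) ^ ((1:ℂ) - w/2) * Complex.Gamma ((l:ℂ)+w-1)
        / (Complex.Gamma (w/2) * Complex.Gamma (l:ℂ)) := by
  have hl0 : (0:ℝ) < l := by positivity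
  have hΓl : Complex.Gamma (l:ℂ) ≠ 0 := Complex.Gamma_ne_zero_of_re_pos (by simpa using hl0)
  rw [show (1:ℂ) - w + ((l:ℂ) + w - 1) = (l:ℂ) by ring]
  by_cases hG : Complex.Gamma (w/2) = 0
  · obtain ⟨m, hm⟩ := (Complex.Gamma_eq_zero_iff _).1 hG
    have hsin : Complex.sin ((Real.pi:ℂ) * w / 2) = 0 := by
      rw [show (Real.pi:ℂ) * w / 2 = ((-(m:ℤ) : ℤ):ℂ) * (Real.pi:ℂ) by
        push_cast
        linear_combination (Real.pi:ℂ) * hm]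
      exact Complex.sin_int_mul_pi _
    rw [hsin, hG]
    simp
  · have hG2 : Complex.Gamma (1 - w/2) ≠ 0 :=
      Complex.Gamma_ne_zero_of_re_pos (by simp; linarith)
    have hπ0 : ((Real.pi : ℝ):ℂ) ≠ 0 := Complex.ofReal_ne_zero.2 Real.pi_ne_zero
    have hrefl : Complex.Gamma (w/2) * Complex.Gamma (1 - w/2)
        * Complex.sin ((Real.pi:ℂ)*w/2) = (Real.pi:ℂ) := by
      have h := Complex.Gamma_mul_Gamma_one_sub (w/2)
      rw [show (Real.pi:ℂ) * (w/2) = (Real.pi:ℂ)*w/2 by ring] at h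
      have hsin : Complex.sin ((Real.pi:ℂ)*w/2) ≠ 0 := by
        intro h0
        rw [h0, div_zero] at h
        exact (mul_ne_zero hG hG2) h
      rw [eq_div_iff hsin] at h
      exact h
    have hdup : Complex.Gamma ((1-w)/2) * Complex.Gamma (1 - w/2)
        = Complex.Gamma (1-w) * ((2:ℂ)^w * ((Real.sqrt Real.pi : ℝ):ℂ)) := by
      have h := Complex.Gamma_mul_Gamma_add_half ((1-w)/2)
      rw [show (1-w)/2 + 1/2 = 1 - w/2 by ring, show 2*((1-w)/2) = 1-w by ring,
        show (1:ℂ) - (1-w) = w by ring] at h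
      rw [h]
      ring
    have h2a : (2:ℂ) ^ ((2:ℂ) - w) = (2:ℂ)^((2:ℂ)-2*w) * (2:ℂ)^w := by
      rw [← cpow_add _ _ two_ne_zero]
      congr 1
      ring
    have hpia : (Real.pi:ℂ) ^ (-((1:ℂ)-w)/2) * (Real.pi:ℂ)^((1:ℂ)-w/2)
        = ((Real.sqrt Real.pi:ℝ):ℂ) := by
      rw [← cpow_add _ _ hπ0,
        show -((1:ℂ)-w)/2 + ((1:ℂ)-w/2) = (((1:ℝ)/2 : ℝ):ℂ) by push_cast; ring,
        ← Complex.ofReal_cpow Real.pi_pos.le, Real.sqrt_eq_rpow]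
    have hsq : ((Real.sqrt Real.pi:ℝ):ℂ) * ((Real.sqrt Real.pi:ℝ):ℂ) = (Real.pi:ℂ) := by
      rw [← Complex.ofReal_mul, Real.mul_self_sqrt Real.pi_pos.le]
    rw [show (2:ℂ) ^ ((2:ℂ) - w) * Complex.sin ((Real.pi:ℂ) * w / 2) *
        (Complex.Gamma (1-w) * Complex.Gamma ((l:ℂ)+w-1) / Complex.Gamma (l:ℂ))
        = ((2:ℂ) ^ ((2:ℂ) - w) * Complex.sin ((Real.pi:ℂ) * w / 2) *
          (Complex.Gamma (1-w) * Complex.Gamma ((l:ℂ)+w-1))) / Complex.Gamma (l:ℂ) by ring]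
    rw [div_eq_div_iff hΓl (mul_ne_zero hG hΓl)]
    refine mul_right_cancel₀ hG2 ?_
    linear_combination
      (Complex.sin ((Real.pi:ℂ)*w/2) * Complex.Gamma (1-w) * Complex.Gamma ((l:ℂ)+w-1)
        * Complex.Gamma (w/2) * Complex.Gamma (l:ℂ) * Complex.Gamma (1 - w/2)) * h2a
      + ((2:ℂ)^((2:ℂ)-2*w) * (2:ℂ)^w * Complex.Gamma (1-w) * Complex.Gamma ((l:ℂ)+w-1)
        * Complex.Gamma (l:ℂ)) * hrefl
      - (Complex.Gamma ((1-w)/2) * (2:ℂ)^((2:ℂ)-2*w) * Complex.Gamma ((l:ℂ)+w-1)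
        * Complex.Gamma (l:ℂ) * Complex.Gamma (1 - w/2)) * hpia
      - (((Real.sqrt Real.pi:ℝ):ℂ) * (2:ℂ)^((2:ℂ)-2*w) * Complex.Gamma ((l:ℂ)+w-1)
        * Complex.Gamma (l:ℂ)) * hdup
      - ((2:ℂ)^((2:ℂ)-2*w) * (2:ℂ)^w * Complex.Gamma (1-w) * Complex.Gamma ((l:ℂ)+w-1)
        * Complex.Gamma (l:ℂ)) * hsq


lemma integrableOn_Iic_of_neg {f : ℝ → ℂ} (h : IntegrableOn (fun x => f (-x)) (Ioi (0:ℝ))) :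
    IntegrableOn f (Iic (0:ℝ)) := by
  have h2 : IntegrableOn ((fun x => f (-x)) ∘ Neg.neg) (Neg.neg ⁻¹' (Ioi (0:ℝ))) volume :=
    ((Measure.measurePreserving_neg (volume : Measure ℝ)).integrableOn_comp_preimage
      (Homeomorph.neg ℝ).measurableEmbedding).2 h
  rw [integrableOn_Iic_iff_integrableOn_Iio]
  simpa [Function.comp_def] using h2

end Stmt2Aux

open Complex MeasureTheory
open MeasureTheory Set Filter Topology Metric Stmt2Aux

theorem stmt_2 (l : ℕ) (hl : Even l) (hl2 : 2 ≤ l) (w : ℂ)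
    (hw1 : 1 - (l : ℝ) < w.re) (hw2 : w.re < 1) :
    (∫ t : ℝ, (1 - I * (t : ℂ) / 2) ^ (-(l : ℤ)) * ((|t| : ℝ) : ℂ) ^ (-w)) =
        (2 : ℂ) ^ ((2 : ℂ) - w) * Complex.sin ((Real.pi : ℂ) * w / 2) *
          (Complex.Gamma (1 - w) * Complex.Gamma ((l : ℂ) + w - 1) /
            Complex.Gamma ((1 - w) + ((l : ℂ) + w - 1))) ∧
      (∫ t : ℝ, (1 - I * (t : ℂ) / 2) ^ (-(l : ℤ)) * ((|t| : ℝ) : ℂ) ^ (-w)) =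
        ((Real.pi : ℂ) ^ (-(1 - w) / 2) * Complex.Gamma ((1 - w) / 2)) *
          (2 : ℂ) ^ ((2 : ℂ) - 2 * w) * (Real.pi : ℂ) ^ ((1 : ℂ) - w / 2) *
          Complex.Gamma ((l : ℂ) + w - 1) /
            (Complex.Gamma (w / 2) * Complex.Gamma (l : ℂ)) := by
  have hcre1 : (-(I/2) : ℂ).re = 0 := by simp
  have hc01 : (-(I/2) : ℂ) ≠ 0 := by simp [Complex.I_ne_zero]
  have hcre2 : ((I/2) : ℂ).re = 0 := by simp
  have hc02 : ((I/2) : ℂ) ≠ 0 := by simp [Complex.I_ne_zero]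
  set F : ℝ → ℂ := fun t => (1 - I * (t : ℂ) / 2) ^ (-(l : ℤ)) * ((|t| : ℝ) : ℂ) ^ (-w) with hF
  have hplus_eq : EqOn F
      (fun t : ℝ => (1 + (-(I/2)) * (t:ℂ)) ^ (-(l:ℤ)) * ((t:ℝ):ℂ) ^ (-w)) (Ioi 0) := by
    intro t ht
    have ht' : (0:ℝ) < t := ht
    simp only [hF]
    rw [abs_of_pos ht', show (1:ℂ) - I * (t:ℂ)/2 = 1 + (-(I/2)) * (t:ℂ) by ring]
  have hminus_eq : EqOn (fun x => F (-x))
      (fun x : ℝ => (1 + (I/2) * (x:ℂ)) ^ (-(l:ℤ)) * ((x:ℝ):ℂ) ^ (-w)) (Ioi 0) := by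
    intro x hx
    have hx' : (0:ℝ) < x := hx
    simp only [hF]
    rw [abs_neg, abs_of_pos hx',
      show (1:ℂ) - I * ((-x : ℝ):ℂ)/2 = 1 + (I/2) * (x:ℂ) by push_cast; ring]
  have hIplus : IntegrableOn F (Ioi (0:ℝ)) :=
    (half_int_main hl2 hw1 hw2 hcre1 hc01).congr_fun
      (fun t ht => (hplus_eq ht).symm) measurableSet_Ioi
  have hIminusAux : IntegrableOn (fun x => F (-x)) (Ioi (0:ℝ)) :=
    (half_int_main hl2 hw1 hw2 hcre2 hc02).congr_fun
      (fun x hx => (hminus_eq hx).symm) measurableSet_Ioi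
  have hIminus : IntegrableOn F (Iic (0:ℝ)) := integrableOn_Iic_of_neg hIminusAux
  have hsplit : (∫ t, F t) = (∫ t in Iic (0:ℝ), F t) + ∫ t in Ioi (0:ℝ), F t :=
    (intervalIntegral.integral_Iic_add_Ioi hIminus hIplus).symm
  have hIic : (∫ t in Iic (0:ℝ), F t) = ∫ x in Ioi (0:ℝ), F (-x) := by
    rw [show Iic (0:ℝ) = Iic (-(0:ℝ)) by norm_num]
    exact (integral_comp_neg_Ioi 0 F).symm
  have hval1 : (∫ t in Ioi (0:ℝ), F t)
      = (-(I/2)) ^ (w-1) * (Complex.Gamma (1-w) * Complex.Gamma ((l:ℂ)+w-1)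
        / Complex.Gamma (l:ℂ)) := by
    rw [setIntegral_congr_fun measurableSet_Ioi hplus_eq]
    exact half hl2 hw1 hw2 hcre1 hc01
  have hval2 : (∫ x in Ioi (0:ℝ), F (-x))
      = ((I/2)) ^ (w-1) * (Complex.Gamma (1-w) * Complex.Gamma ((l:ℂ)+w-1)
        / Complex.Gamma (l:ℂ)) := by
    rw [setIntegral_congr_fun measurableSet_Ioi hminus_eq]
    exact half hl2 hw1 hw2 hcre2 hc02
  have htot : (∫ t, F t) = ((2:ℂ) ^ ((2:ℂ) - w) * Complex.sin ((Real.pi:ℂ) * w / 2)) *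
      (Complex.Gamma (1-w) * Complex.Gamma ((l:ℂ)+w-1) / Complex.Gamma (l:ℂ)) := by
    rw [hsplit, hIic, hval1, hval2, ← powsum w]
    ring
  have hGsum : Complex.Gamma ((1 - w) + ((l:ℂ) + w - 1)) = Complex.Gamma (l:ℂ) := by
    rw [show (1:ℂ) - w + ((l:ℂ)+w-1) = (l:ℂ) by ring]
  refine ⟨?_, ?_⟩
  · rw [hGsum]
    exact htot.trans (by ring)
  · have hga := gamma_alg hl2 hw1 hw2
    rw [hGsum] at hga
    refine htot.trans (?_)
    rw [← hga]
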